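/- Fix integers n, m, ℓ ≥ 1 and reals R = n/m, D ∈ (0,1/2), D' ∈ [D, 1/2) with c = D'/(1−D'). Let G be an n×m binary matrix with rows of weight ≤ ℓ, C = {uG : u}, and let S = WG + Z be the test-channel output (W uniform, Z iid Bernoulli(D')). Then for every s within Hamming distance Dm of some codeword ŝ ∈ C: P(S = s) ≥ 2^{-n}·(1−D')^m·c^{Dm}·Σ_{w=0}^{⌊m/ℓ⌋} binom(n, w)·c^{ℓw}. -/

import Mathlib

open Finset

lemma zmod2_add (a b x : ZMod 2) : a + b = x ↔ b = x + a := by revert a b x; decide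

lemma zmod2_ne (a b : ZMod 2) : a + b = 1 ↔ a ≠ b := by revert a b; decide

lemma zmod2_aab (a s : ZMod 2) : a + (s + a) = s := by revert a s; decide

lemma zmod2_sub (a b : ZMod 2) : a - (b + a) = b := by revert a b; decide

/-- sum over vectors of `c^(ℓ·wt v)` equals the binomial sum. -/
lemma sum_wt (n ℓ : ℕ) (c : ℝ) :
    ∑ v : Fin n → ZMod 2, c ^ (ℓ * hammingNorm v)
      = ∑ w ∈ Finset.range (n + 1), (n.choose w : ℝ) * c ^ (ℓ * w) := by
  have hbij : Function.Bijective
      (fun T : Finset (Fin n) => (fun i => if i ∈ T then (1 : ZMod 2) else 0)) := by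
    constructor
    · intro T T' h
      ext i
      by_contra hi
      have := congrFun h i
      rcases Decidable.em (i ∈ T) with h1 | h1 <;> rcases Decidable.em (i ∈ T') with h2 | h2 <;>
        simp [h1, h2] at this hi ⊢
    · intro v
      refine ⟨Finset.univ.filter (fun i => v i = 1), ?_⟩
      funext i
      by_cases h : v i = 1
      · simp [h]
      · simp only [Finset.mem_filter, Finset.mem_univ, true_and, h, if_false]
        revert h; generalize v i = x; revert x; decide
  rw [← Fintype.sum_bijective _ hbij (fun T => c ^ (ℓ * T.card)) _ (fun T => ?_)]
  · rw [← Finset.powerset_univ, Finset.sum_powerset]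
    rw [Finset.card_univ, Fintype.card_fin]
    refine Finset.sum_congr rfl fun w _ => ?_
    rw [Finset.sum_congr rfl (fun T hT => ?_), Finset.sum_const, Finset.card_powersetCard,
      Finset.card_univ, Fintype.card_fin, nsmul_eq_mul]
    rw [(Finset.mem_powersetCard.1 hT).2]
  · have h : hammingNorm (fun i => if i ∈ T then (1 : ZMod 2) else 0) = T.card := by
      unfold hammingNorm
      congr 1
      ext i
      by_cases h : i ∈ T <;> simp [h]
    rw [h]

/-- weight of a codeword is at most `ℓ` times the weight of the message. -/
lemma wt_bound {n m ℓ : ℕ} (G : Fin n → Fin m → ZMod 2) (hG : ∀ i, hammingNorm (G i) ≤ ℓ)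
    (v : Fin n → ZMod 2) :
    hammingNorm (fun j => ∑ i, v i * G i j) ≤ ℓ * hammingNorm v := by
  unfold hammingNorm
  calc #{j | (fun j => ∑ i, v i * G i j) j ≠ 0}
      ≤ (({i | v i ≠ 0} : Finset (Fin n)).biUnion (fun i => {j | G i j ≠ 0})).card := by
        apply Finset.card_le_card
        intro j hj
        simp only [Finset.mem_filter, Finset.mem_univ, true_and] at hj
        obtain ⟨i, hi⟩ : ∃ i, v i * G i j ≠ 0 := by
          by_contra h; push_neg at h; exact hj (Finset.sum_eq_zero (fun i _ => h i))
        have hv : v i ≠ 0 := fun h => hi (by rw [h, zero_mul])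
        have hg : G i j ≠ 0 := fun h => hi (by rw [h, mul_zero])
        exact Finset.mem_biUnion.2 ⟨i, by simpa using hv, by simpa using hg⟩
    _ ≤ ∑ i ∈ ({i | v i ≠ 0} : Finset (Fin n)), #{j | G i j ≠ 0} := Finset.card_biUnion_le
    _ ≤ ∑ _i ∈ ({i | v i ≠ 0} : Finset (Fin n)), ℓ := Finset.sum_le_sum (fun i _ => hG i)
    _ = ℓ * #{i | v i ≠ 0} := by rw [Finset.sum_const, smul_eq_mul, mul_comm]


/-- Central pointwise bound of the test-channel argument. For an
LDGM code with generator rows of weight at most `ℓ`, `c = D'/(1−D')` with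
`D ≤ D' < 1/2`, and the test-channel output `S = WG + Z` (`W` uniform on
`{0,1}^n`, `Z` iid Bernoulli(`D'`)): for every source word `s` within Hamming
distance `Dm` of some codeword,
`P(S = s) ≥ 2^{-n}·(1−D')^m·c^{Dm}·Σ_{w=0}^{⌊m/ℓ⌋} C(n,w)·c^{ℓw}`. -/
theorem stmt_19 (n m ℓ : ℕ) (hn : 0 < n) (hm : 0 < m) (hℓ : 0 < ℓ)
    (R : ℝ) (hR : R = (n : ℝ) / m)
    (D D' : ℝ) (hD : D ∈ Set.Ioo (0 : ℝ) (1 / 2))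
    (hD' : D' ∈ Set.Ico D (1 / 2)) (c : ℝ) (hc : c = D' / (1 - D'))
    (G : Fin n → Fin m → ZMod 2) (hG : ∀ i, hammingNorm (G i) ≤ ℓ)
    (s : Fin m → ZMod 2)
    (hs : ∃ u₀ : Fin n → ZMod 2,
        (hammingDist s (fun j => ∑ i, u₀ i * G i j) : ℝ) ≤ D * m)
    (P : ℝ)
    (hP : P = ∑ u : Fin n → ZMod 2, ∑ z : Fin m → ZMod 2,
        ((2 : ℝ) ^ n)⁻¹ * (∏ j, if z j = 1 then D' else 1 - D') *
          (if (fun j => (∑ i, u i * G i j) + z j) = s then 1 else 0)) :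
    ((2 : ℝ) ^ n)⁻¹ * (1 - D') ^ m * c ^ (D * m) *
        ∑ w ∈ Finset.range (m / ℓ + 1), (n.choose w : ℝ) * c ^ (ℓ * w)
      ≤ P := by
  obtain ⟨u₀, hu₀⟩ := hs
  obtain ⟨hD0, hD2⟩ := hD
  obtain ⟨hDD', hD'2⟩ := hD'
  have hD'pos : 0 < D' := lt_of_lt_of_le hD0 hDD'
  have h1D' : 0 < 1 - D' := by linarith
  have hc0 : 0 < c := by rw [hc]; positivity
  have hc1 : c < 1 := by rw [hc, div_lt_one h1D']; linarith
  set F : (Fin n → ZMod 2) → (Fin m → ZMod 2) := fun u j => ∑ i, u i * G i j with hF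
  -- collapse the z-sum
  have hz : ∀ u : Fin n → ZMod 2,
      (∑ z : Fin m → ZMod 2, ((2 : ℝ) ^ n)⁻¹ * (∏ j, if z j = 1 then D' else 1 - D') *
          (if (fun j => (∑ i, u i * G i j) + z j) = s then 1 else 0))
        = ((2 : ℝ) ^ n)⁻¹ * ∏ j, (if s j + F u j = 1 then D' else 1 - D') := by
    intro u
    rw [Finset.sum_eq_single (fun j => s j + F u j)]
    · have h1 : (fun j => (∑ i, u i * G i j) + (fun j => s j + F u j) j) = s := by
        funext j
        exact zmod2_aab _ _
      rw [if_pos h1, mul_one]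
    · intro z _ hzne
      rw [if_neg, mul_zero]
      intro hcontra
      apply hzne
      funext j
      exact (zmod2_add _ _ _).1 (congrFun hcontra j)
    · intro h; exact absurd (Finset.mem_univ _) h
  -- the product equals (1-D')^m c^d
  have key : ∀ d : ℕ, d ≤ m → D' ^ d * (1 - D') ^ (m - d) = (1 - D') ^ m * c ^ d := by
    intro d hd
    have hsplit : (1 - D') ^ m = (1 - D') ^ (m - d) * (1 - D') ^ d := by
      rw [← pow_add, Nat.sub_add_cancel hd]
    rw [hc, div_pow, hsplit]
    field_simp
  have hd_le : ∀ u : Fin n → ZMod 2, hammingDist s (F u) ≤ m := fun u =>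
    le_trans hammingDist_le_card_fintype (by simp)
  have hprod : ∀ u : Fin n → ZMod 2,
      (∏ j, (if s j + F u j = 1 then D' else 1 - D'))
        = (1 - D') ^ m * c ^ hammingDist s (F u) := by
    intro u
    rw [Finset.prod_ite, Finset.prod_const, Finset.prod_const]
    have hfilt : (Finset.univ.filter fun j => s j + F u j = 1).card = hammingDist s (F u) := by
      unfold hammingDist
      congr 1
      ext j
      simp [zmod2_ne]
    have hfilt2 : (Finset.univ.filter fun j => ¬(s j + F u j = 1)).card
        = m - hammingDist s (F u) := by
      have := Finset.card_filter_add_card_filter_not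
        (s := (Finset.univ : Finset (Fin m))) (p := fun j => s j + F u j = 1)
      simp only [Finset.card_univ, Fintype.card_fin] at this
      omega
    rw [hfilt, hfilt2, key _ (hd_le u)]
  have hPeq : P = ((2 : ℝ) ^ n)⁻¹ * (1 - D') ^ m *
      ∑ u : Fin n → ZMod 2, c ^ hammingDist s (F u) := by
    rw [hP, Finset.sum_congr rfl (fun u _ => hz u)]
    rw [Finset.sum_congr rfl (fun u _ => by rw [hprod u])]
    rw [← Finset.mul_sum, Finset.mul_sum, Finset.mul_sum]
    exact Finset.sum_congr rfl (fun u _ => by ring)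
  -- per-term bound after recentering
  have hterm : ∀ v : Fin n → ZMod 2,
      c ^ (D * m) * c ^ (ℓ * hammingNorm v) ≤ c ^ hammingDist s (F (v + u₀)) := by
    intro v
    have hFadd : F (v + u₀) = fun j => F v j + F u₀ j := by
      funext j
      simp only [hF, Pi.add_apply, add_mul, Finset.sum_add_distrib]
    have hdist : hammingDist (F u₀) (fun j => F v j + F u₀ j) = hammingNorm (F v) := by
      rw [hammingDist_eq_hammingNorm]
      congr 1
      funext j
      simp only [Pi.add_apply, Pi.neg_apply]
      ring
    have htri : hammingDist s (F (v + u₀)) ≤ hammingDist s (F u₀) + ℓ * hammingNorm v := by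
      calc hammingDist s (F (v + u₀))
          ≤ hammingDist s (F u₀) + hammingDist (F u₀) (F (v + u₀)) :=
            hammingDist_triangle _ _ _
        _ = hammingDist s (F u₀) + hammingNorm (F v) := by rw [hFadd, hdist]
        _ ≤ hammingDist s (F u₀) + ℓ * hammingNorm v := by
            have hwt : hammingNorm (F v) ≤ ℓ * hammingNorm v := wt_bound G hG v
            omega
    have hle : (hammingDist s (F (v + u₀)) : ℝ) ≤ D * m + ((ℓ * hammingNorm v : ℕ) : ℝ) := by
      calc (hammingDist s (F (v + u₀)) : ℝ)
          ≤ ((hammingDist s (F u₀) + ℓ * hammingNorm v : ℕ) : ℝ) := by exact_mod_cast htri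
        _ = (hammingDist s (F u₀) : ℝ) + ((ℓ * hammingNorm v : ℕ) : ℝ) := by push_cast; ring
        _ ≤ D * m + ((ℓ * hammingNorm v : ℕ) : ℝ) := by
            have : (hammingDist s (F u₀) : ℝ) ≤ D * m := hu₀
            linarith
    calc c ^ (D * m) * c ^ (ℓ * hammingNorm v)
        = c ^ (D * m + ((ℓ * hammingNorm v : ℕ) : ℝ)) := by
          rw [← Real.rpow_natCast c (ℓ * hammingNorm v), ← Real.rpow_add hc0]
      _ ≤ c ^ ((hammingDist s (F (v + u₀)) : ℕ) : ℝ) :=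
          Real.rpow_le_rpow_of_exponent_ge hc0 hc1.le hle
      _ = c ^ hammingDist s (F (v + u₀)) := Real.rpow_natCast c _
  -- range extension
  have hrange : ∑ w ∈ Finset.range (m / ℓ + 1), (n.choose w : ℝ) * c ^ (ℓ * w)
      ≤ ∑ w ∈ Finset.range (n + 1), (n.choose w : ℝ) * c ^ (ℓ * w) := by
    set N := max (m / ℓ + 1) (n + 1) with hN
    have h1 : ∑ w ∈ Finset.range (m / ℓ + 1), (n.choose w : ℝ) * c ^ (ℓ * w)
        ≤ ∑ w ∈ Finset.range N, (n.choose w : ℝ) * c ^ (ℓ * w) :=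
      Finset.sum_le_sum_of_subset_of_nonneg
        (Finset.range_subset_range.2 (le_max_left _ _)) (fun i _ _ => by positivity)
    have h2 : ∑ w ∈ Finset.range (n + 1), (n.choose w : ℝ) * c ^ (ℓ * w)
        = ∑ w ∈ Finset.range N, (n.choose w : ℝ) * c ^ (ℓ * w) := by
      apply Finset.sum_subset (Finset.range_subset_range.2 (le_max_right _ _))
      intro x hx hxn
      have hlt : n < x := by
        simp only [Finset.mem_range] at hxn
        omega
      simp [Nat.choose_eq_zero_of_lt hlt]
    rw [h2]
    exact h1
  have main : c ^ (D * m) * ∑ w ∈ Finset.range (m / ℓ + 1), (n.choose w : ℝ) * c ^ (ℓ * w)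
      ≤ ∑ u : Fin n → ZMod 2, c ^ hammingDist s (F u) := by
    have hcD : (0 : ℝ) ≤ c ^ (D * m) := Real.rpow_nonneg hc0.le _
    calc c ^ (D * m) * ∑ w ∈ Finset.range (m / ℓ + 1), (n.choose w : ℝ) * c ^ (ℓ * w)
        ≤ c ^ (D * m) * ∑ w ∈ Finset.range (n + 1), (n.choose w : ℝ) * c ^ (ℓ * w) :=
          mul_le_mul_of_nonneg_left hrange hcD
      _ = c ^ (D * m) * ∑ v : Fin n → ZMod 2, c ^ (ℓ * hammingNorm v) := by rw [sum_wt]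
      _ = ∑ v : Fin n → ZMod 2, c ^ (D * m) * c ^ (ℓ * hammingNorm v) := by
          rw [Finset.mul_sum]
      _ ≤ ∑ v : Fin n → ZMod 2, c ^ hammingDist s (F (v + u₀)) :=
          Finset.sum_le_sum (fun v _ => hterm v)
      _ = ∑ u : Fin n → ZMod 2, c ^ hammingDist s (F u) :=
          Fintype.sum_bijective (· + u₀) (Equiv.addRight u₀).bijective _ _ (fun v => rfl)
  rw [hPeq]
  calc ((2 : ℝ) ^ n)⁻¹ * (1 - D') ^ m * c ^ (D * m) *
        ∑ w ∈ Finset.range (m / ℓ + 1), (n.choose w : ℝ) * c ^ (ℓ * w)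
      = ((2 : ℝ) ^ n)⁻¹ * (1 - D') ^ m *
          (c ^ (D * m) * ∑ w ∈ Finset.range (m / ℓ + 1), (n.choose w : ℝ) * c ^ (ℓ * w)) := by
        ring
    _ ≤ ((2 : ℝ) ^ n)⁻¹ * (1 - D') ^ m *
          ∑ u : Fin n → ZMod 2, c ^ hammingDist s (F u) := by
        apply mul_le_mul_of_nonneg_left main
        positivity
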